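/- For integers p, q ≥ 1 and every integer k ≥ 1, the numbers γ_{k,p,q} satisfy the recurrence γ_{k,p,q} = γ_{k,p−1,q} + γ_{k,p,q−1} + (p+q−1) · γ_{k−1,p−1,q−1}. -/

import Mathlib

/-- A signed `(p,q)`-involution: a pair `(π, ε)` where `π` is an involution of
`{1,…,p+q}` and `ε` assigns a sign (`true` = `+`, `false` = `-`) to each fixed
point of `π` (we normalize `ε` to be `true` on non-fixed points), such that the
number of fixed points with sign `+` minus the number of fixed points with
sign `-` equals `p - q`. -/
def IsSignedInv (p q : ℕ) (x : Equiv.Perm (Fin (p + q)) × (Fin (p + q) → Bool)) : Prop :=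
  x.1 * x.1 = 1 ∧ (∀ i, x.1 i ≠ i → x.2 i = true) ∧
    ((Finset.univ.filter fun i => x.1 i = i ∧ x.2 i = true).card : ℤ) -
      ((Finset.univ.filter fun i => x.1 i = i ∧ x.2 i = false).card : ℤ) = (p : ℤ) - (q : ℤ)

/-- `γ_{k,p,q}`: the number of signed `(p,q)`-involutions whose underlying
involution has exactly `k` two-cycles, i.e. exactly `2k` non-fixed points. -/
noncomputable def gammaCount (k p q : ℕ) : ℕ :=
  Nat.card {x : Equiv.Perm (Fin (p + q)) × (Fin (p + q) → Bool) //
    IsSignedInv p q x ∧ (Finset.univ.filter fun i => x.1 i ≠ i).card = 2 * k}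

/-- `α_{p,q}`: the number of signed `(p,q)`-involutions. -/
noncomputable def alphaCount (p q : ℕ) : ℕ :=
  Nat.card {x : Equiv.Perm (Fin (p + q)) × (Fin (p + q) → Bool) // IsSignedInv p q x}

namespace SignedInvAux

def Cond (k : ℕ) (t : ℤ) (n : ℕ) (x : Equiv.Perm (Fin n) × (Fin n → Bool)) : Prop :=
  x.1 * x.1 = 1 ∧ (∀ i, x.1 i ≠ i → x.2 i = true) ∧
    ((Finset.univ.filter fun i => x.1 i = i ∧ x.2 i = true).card : ℤ) -
      ((Finset.univ.filter fun i => x.1 i = i ∧ x.2 i = false).card : ℤ) = t ∧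
    (Finset.univ.filter fun i => x.1 i ≠ i).card = 2 * k

noncomputable def G (k : ℕ) (t : ℤ) (n : ℕ) : ℕ :=
  Nat.card {x : Equiv.Perm (Fin n) × (Fin n → Bool) // Cond k t n x}

lemma gamma_eq (k p q : ℕ) : gammaCount k p q = G k ((p : ℤ) - q) (p + q) := by
  unfold gammaCount G
  refine Nat.card_congr (Equiv.subtypeEquivRight ?_)
  intro x
  unfold IsSignedInv Cond
  tauto

lemma card_split {α : Type*} [Finite α] (C Q : α → Prop) :
    Nat.card {x // C x} =
      Nat.card {x // C x ∧ Q x} + Nat.card {x // C x ∧ ¬ Q x} := by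
  classical
  rw [← Nat.card_sum]
  exact Nat.card_congr <|
    ((Equiv.sumCongr (Equiv.subtypeSubtypeEquivSubtypeInter C Q)
      (Equiv.subtypeSubtypeEquivSubtypeInter C (fun x => ¬ Q x))).symm.trans
      (Equiv.sumCompl fun y : {x // C x} => Q y.1)).symm

lemma filter_card_succ {m : ℕ} (Q : Fin (m+1) → Prop) [DecidablePred Q] :
    (Finset.univ.filter Q).card =
      (if Q 0 then 1 else 0) + (Finset.univ.filter fun i : Fin m => Q i.succ).card := by
  rw [Finset.card_filter, Fin.sum_univ_succ, Finset.card_filter]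

lemma filter_card_perm {α : Type*} [Fintype α] [DecidableEq α] (w : Equiv.Perm α)
    (P : α → Prop) [DecidablePred P] :
    (Finset.univ.filter fun i => P (w i)).card = (Finset.univ.filter P).card := by
  refine Finset.card_nbij' (fun i => w i) (fun j => w.symm j) ?_ ?_ ?_ ?_ <;> intro a ha <;> simp_all

end SignedInvAux

namespace SignedInvAux

lemma mul_self_iff {α : Type*} (π : Equiv.Perm α) :
    π * π = 1 ↔ ∀ a, π (π a) = a := by
  constructor
  · intro h a
    have := congrArg (fun σ : Equiv.Perm α => σ a) h
    simpa using this
  · intro h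
    ext a
    simp [Equiv.Perm.mul_apply, h a]

/-- Restriction of an involution fixing `0` to `Fin m`. -/
def resPerm {m : ℕ} (π : Equiv.Perm (Fin (m+1))) (hπ : π * π = 1) (h0 : π 0 = 0) :
    Equiv.Perm (Fin m) :=
  Function.Involutive.toPerm
    (fun i => (π i.succ).pred (by
      intro h
      have := (mul_self_iff π).1 hπ i.succ
      rw [h, h0] at this
      exact Fin.succ_ne_zero i this.symm))
    (by
      intro i
      have h2 := (mul_self_iff π).1 hπ
      simp only [Fin.succ_pred, h2]
      exact Fin.pred_succ _)

@[simp] lemma resPerm_succ {m : ℕ} (π : Equiv.Perm (Fin (m+1))) (hπ : π * π = 1)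
    (h0 : π 0 = 0) (i : Fin m) : ((resPerm π hπ h0) i).succ = π i.succ := by
  simp [resPerm, Function.Involutive.toPerm]

lemma resPerm_fixed_iff {m : ℕ} (π : Equiv.Perm (Fin (m+1))) (hπ : π * π = 1)
    (h0 : π 0 = 0) (i : Fin m) : (resPerm π hπ h0) i = i ↔ π i.succ = i.succ := by
  rw [← Fin.succ_inj, resPerm_succ]

lemma resPerm_mul_self {m : ℕ} (π : Equiv.Perm (Fin (m+1))) (hπ : π * π = 1)
    (h0 : π 0 = 0) : resPerm π hπ h0 * resPerm π hπ h0 = 1 := by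
  rw [mul_self_iff]
  intro a
  have h2 := (mul_self_iff π).1 hπ
  have h3 : ((resPerm π hπ h0) ((resPerm π hπ h0) a)).succ = a.succ := by
    rw [resPerm_succ, resPerm_succ, h2]
  exact Fin.succ_inj.mp h3

/-- Extension of an involution of `Fin m` to `Fin (m+1)` fixing `0`. -/
def extPerm {m : ℕ} (σ : Equiv.Perm (Fin m)) (hσ : σ * σ = 1) :
    Equiv.Perm (Fin (m+1)) :=
  Function.Involutive.toPerm (Fin.cases 0 fun i => (σ i).succ)
    (by
      intro a
      have h2 := (mul_self_iff σ).1 hσ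
      induction a using Fin.cases with
      | zero => simp
      | succ i => simp [h2])

@[simp] lemma extPerm_zero {m : ℕ} (σ : Equiv.Perm (Fin m)) (hσ : σ * σ = 1) :
    extPerm σ hσ 0 = 0 := by
  simp [extPerm, Function.Involutive.toPerm]

@[simp] lemma extPerm_succ {m : ℕ} (σ : Equiv.Perm (Fin m)) (hσ : σ * σ = 1) (i : Fin m) :
    extPerm σ hσ i.succ = (σ i).succ := by
  simp [extPerm, Function.Involutive.toPerm]

lemma extPerm_mul_self {m : ℕ} (σ : Equiv.Perm (Fin m)) (hσ : σ * σ = 1) :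
    extPerm σ hσ * extPerm σ hσ = 1 := by
  rw [mul_self_iff]
  intro a
  have h2 := (mul_self_iff σ).1 hσ
  induction a using Fin.cases with
  | zero => simp
  | succ i => simp [h2]

end SignedInvAux

namespace SignedInvAux

lemma res_ext {m : ℕ} (σ : Equiv.Perm (Fin m)) (hσ : σ * σ = 1) :
    resPerm (extPerm σ hσ) (extPerm_mul_self σ hσ) (extPerm_zero σ hσ) = σ :=
  Equiv.ext fun i => Fin.succ_inj.mp (by rw [resPerm_succ, extPerm_succ])

lemma ext_res {m : ℕ} (π : Equiv.Perm (Fin (m+1))) (hπ : π * π = 1) (h0 : π 0 = 0) :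
    extPerm (resPerm π hπ h0) (resPerm_mul_self π hπ h0) = π := by
  refine Equiv.ext fun a => ?_
  induction a using Fin.cases with
  | zero => rw [extPerm_zero, h0]
  | succ i => rw [extPerm_succ, resPerm_succ]

lemma card_fix_res {m : ℕ} (π : Equiv.Perm (Fin (m+1))) (hπ : π * π = 1) (h0 : π 0 = 0)
    (ε : Fin (m+1) → Bool) (c : Bool) :
    (Finset.univ.filter fun i : Fin (m+1) => π i = i ∧ ε i = c).card
      = (if ε 0 = c then 1 else 0) +
        (Finset.univ.filter fun i : Fin m => (resPerm π hπ h0) i = i ∧ ε i.succ = c).card := by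
  rw [filter_card_succ]
  congr 1
  · simp [h0]
  · simp [resPerm_fixed_iff]

lemma card_mov_res {m : ℕ} (π : Equiv.Perm (Fin (m+1))) (hπ : π * π = 1) (h0 : π 0 = 0) :
    (Finset.univ.filter fun i : Fin (m+1) => π i ≠ i).card
      = (Finset.univ.filter fun i : Fin m => (resPerm π hπ h0) i ≠ i).card := by
  rw [filter_card_succ]
  simp [h0, resPerm_fixed_iff]

def resEquiv (m k : ℕ) (t : ℤ) (b : Bool) :
    {x : Equiv.Perm (Fin (m+1)) × (Fin (m+1) → Bool) //
      (Cond k t (m+1) x ∧ x.1 0 = 0) ∧ x.2 0 = b} ≃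
    {y : Equiv.Perm (Fin m) × (Fin m → Bool) // Cond k (if b then t - 1 else t + 1) m y} where
  toFun x := ⟨(resPerm x.1.1 x.2.1.1.1 x.2.1.2, fun i => x.1.2 i.succ), by
    obtain ⟨⟨π, ε⟩, ⟨⟨⟨h1, h2, h3, h4⟩, h0⟩, hb⟩⟩ := x
    dsimp only at h1 h2 h3 h4 h0 hb ⊢
    refine ⟨resPerm_mul_self π h1 h0, ?_, ?_, ?_⟩
    · intro i hi
      exact h2 i.succ fun hq => hi ((resPerm_fixed_iff π h1 h0 i).mpr hq)
    · rw [card_fix_res π h1 h0 ε true, card_fix_res π h1 h0 ε false, hb] at h3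
      cases b <;> simp only [if_true, if_false, Bool.true_eq_false, Bool.false_eq_true,
        reduceIte] at h3 ⊢ <;> push_cast at h3 ⊢ <;> linarith
    · rw [card_mov_res π h1 h0] at h4
      exact h4⟩
  invFun y := ⟨(extPerm y.1.1 y.2.1, Fin.cases b y.1.2), by
    obtain ⟨⟨σ, δ⟩, ⟨g1, g2, g3, g4⟩⟩ := y
    dsimp only at g1 g2 g3 g4 ⊢
    have hz : extPerm σ g1 0 = 0 := extPerm_zero σ g1
    refine ⟨⟨⟨extPerm_mul_self σ g1, ?_, ?_, ?_⟩, hz⟩, by simp⟩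
    · intro i hi
      induction i using Fin.cases with
      | zero => exact absurd hz hi
      | succ j =>
        rw [extPerm_succ] at hi
        have hj : σ j ≠ j := fun hq => hi (by rw [hq])
        simpa using g2 j hj
    · rw [card_fix_res (extPerm σ g1) (extPerm_mul_self σ g1) hz _ true,
        card_fix_res (extPerm σ g1) (extPerm_mul_self σ g1) hz _ false, res_ext]
      dsimp only [Fin.cases_zero, Fin.cases_succ]
      cases b <;> simp only [if_true, if_false, Bool.true_eq_false, Bool.false_eq_true,
        reduceIte] at g3 ⊢ <;> push_cast
      · convert (show (0:ℤ) + ((Finset.univ.filter fun i => σ i = i ∧ δ i = true).card : ℤ) -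
          (1 + ((Finset.univ.filter fun i => σ i = i ∧ δ i = false).card : ℤ)) = t by linarith) using 3 <;> rfl
      · convert (show (1:ℤ) + ((Finset.univ.filter fun i => σ i = i ∧ δ i = true).card : ℤ) -
          (0 + ((Finset.univ.filter fun i => σ i = i ∧ δ i = false).card : ℤ)) = t by linarith) using 3 <;> rfl
    · rw [card_mov_res (extPerm σ g1) (extPerm_mul_self σ g1) hz, res_ext]
      exact g4⟩
  left_inv x := by
    obtain ⟨⟨π, ε⟩, ⟨⟨hc, h0⟩, hb⟩⟩ := x
    refine Subtype.ext (Prod.ext ?_ ?_)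
    · exact ext_res π hc.1 h0
    · funext a
      induction a using Fin.cases with
      | zero => simpa using hb.symm
      | succ i => simp
  right_inv y := by
    obtain ⟨⟨σ, δ⟩, hy⟩ := y
    refine Subtype.ext (Prod.ext ?_ ?_)
    · exact res_ext σ hy.1
    · funext i
      simp

end SignedInvAux

namespace SignedInvAux

variable {n : ℕ}

/-- Conjugation of a signed permutation by an involution `w`. -/
def conj (w : Equiv.Perm (Fin n)) (x : Equiv.Perm (Fin n) × (Fin n → Bool)) :
    Equiv.Perm (Fin n) × (Fin n → Bool) :=
  (w * x.1 * w, fun i => x.2 (w i))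

lemma conj_fst_apply (w : Equiv.Perm (Fin n)) (x) (i : Fin n) :
    (conj w x).1 i = w (x.1 (w i)) := rfl

lemma conj_conj (w : Equiv.Perm (Fin n)) (hw : w * w = 1) (x) :
    conj w (conj w x) = x := by
  have hw' := (mul_self_iff w).1 hw
  unfold conj
  refine Prod.ext ?_ ?_
  · refine Equiv.ext fun a => ?_
    simp [Equiv.Perm.mul_apply, hw']
  · funext i
    simp [hw']

lemma conj_fixed_iff (w : Equiv.Perm (Fin n)) (hw : w * w = 1) (x) (i : Fin n) :
    (conj w x).1 i = i ↔ x.1 (w i) = w i := by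
  have hw' := (mul_self_iff w).1 hw
  rw [conj_fst_apply]
  constructor
  · intro h
    conv_rhs => rw [← h]
    rw [hw']
  · intro h
    rw [h, hw']

lemma cond_conj {k : ℕ} {t : ℤ} (w : Equiv.Perm (Fin n)) (hw : w * w = 1) (x)
    (h : Cond k t n x) : Cond k t n (conj w x) := by
  classical
  obtain ⟨h1, h2, h3, h4⟩ := h
  have hw' := (mul_self_iff w).1 hw
  have hπ' := (mul_self_iff x.1).1 h1
  refine ⟨?_, ?_, ?_, ?_⟩
  · rw [mul_self_iff]
    intro a
    simp [conj, Equiv.Perm.mul_apply, hw', hπ']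
  · intro i hi
    have : x.1 (w i) ≠ w i := fun hq => hi ((conj_fixed_iff w hw x i).mpr hq)
    exact h2 (w i) this
  · have e1 : ∀ c : Bool, (Finset.univ.filter fun i => (conj w x).1 i = i ∧ (conj w x).2 i = c).card
        = (Finset.univ.filter fun i => x.1 i = i ∧ x.2 i = c).card := by
      intro c
      rw [← filter_card_perm w (fun j => x.1 j = j ∧ x.2 j = c)]
      congr 1
      apply Finset.filter_congr
      intro i _
      rw [conj_fixed_iff w hw x i]
      exact Iff.rfl
    rw [e1 true, e1 false]
    exact h3
  · rw [← filter_card_perm w (fun j => x.1 j ≠ j)] at h4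
    rw [← h4]
    congr 1
    apply Finset.filter_congr
    intro i _
    rw [not_iff_not, conj_fixed_iff w hw x i]

lemma mul_swap_invol (π : Equiv.Perm (Fin n)) (hπ : π * π = 1) (a b : Fin n)
    (hs : Equiv.swap (π a) (π b) = Equiv.swap a b) :
    (π * Equiv.swap a b) * (π * Equiv.swap a b) = 1 := by
  have hc : π * Equiv.swap a b = Equiv.swap a b * π := by
    rw [Equiv.mul_swap_eq_swap_mul, hs]
  have h2 : Equiv.swap a b * Equiv.swap a b = 1 := Equiv.swap_mul_self a b
  have : π * (Equiv.swap a b * (π * Equiv.swap a b)) = 1 := by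
    rw [← mul_assoc (Equiv.swap a b) π, ← hc, mul_assoc π, h2, mul_one, hπ]
  simpa [mul_assoc] using this

end SignedInvAux

namespace SignedInvAux

lemma swap_sq {n : ℕ} (a b : Fin n) : Equiv.swap a b * Equiv.swap a b = 1 :=
  Equiv.swap_mul_self a b

def conjEquiv (m k : ℕ) (t : ℤ) :
    {x : Equiv.Perm (Fin (m+2)) × (Fin (m+2) → Bool) //
        Cond k t (m+2) x ∧ x.1 0 ≠ 0} ≃
      Fin (m+1) × {x : Equiv.Perm (Fin (m+2)) × (Fin (m+2) → Bool) //
        Cond k t (m+2) x ∧ x.1 0 = 1} where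
  toFun x := ((x.1.1 0).pred x.2.2, ⟨conj (Equiv.swap 1 (x.1.1 0)) x.1, by
    obtain ⟨⟨π, ε⟩, hc, h0⟩ := x
    dsimp only at h0 hc ⊢
    refine ⟨cond_conj _ (swap_sq _ _) _ hc, ?_⟩
    rw [conj_fst_apply]
    rw [Equiv.swap_apply_of_ne_of_ne Fin.zero_ne_one (Ne.symm h0)]
    exact Equiv.swap_apply_right 1 (π 0)⟩)
  invFun jy := ⟨conj (Equiv.swap 1 jy.1.succ) jy.2.1, by
    obtain ⟨j, ⟨⟨ρ, δ⟩, hc, h1⟩⟩ := jy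
    dsimp only at h1 hc ⊢
    refine ⟨cond_conj _ (swap_sq _ _) _ hc, ?_⟩
    rw [conj_fst_apply]
    rw [Equiv.swap_apply_of_ne_of_ne Fin.zero_ne_one (Ne.symm (Fin.succ_ne_zero j))]
    rw [h1]
    rw [Equiv.swap_apply_left]
    exact Fin.succ_ne_zero j⟩
  left_inv x := by
    obtain ⟨⟨π, ε⟩, hc, h0⟩ := x
    refine Subtype.ext ?_
    dsimp only
    rw [Fin.succ_pred]
    exact conj_conj _ (swap_sq _ _) _
  right_inv jy := by
    obtain ⟨j, ⟨⟨ρ, δ⟩, hc, h1⟩⟩ := jy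
    have hv : (conj (Equiv.swap 1 j.succ) (ρ, δ)).1 0 = j.succ := by
      rw [conj_fst_apply]
      rw [Equiv.swap_apply_of_ne_of_ne Fin.zero_ne_one (Ne.symm (Fin.succ_ne_zero j))]
      rw [h1]
      exact Equiv.swap_apply_left 1 j.succ
    refine Prod.ext ?_ (Subtype.ext ?_)
    · exact Fin.succ_inj.mp (by rw [Fin.succ_pred]; exact hv)
    · show conj _ _ = _
      rw [hv]
      exact conj_conj _ (swap_sq _ _) _

end SignedInvAux

namespace SignedInvAux

lemma ss_ne_one {m : ℕ} (i : Fin m) : (i.succ.succ : Fin (m+2)) ≠ 1 := by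
  intro h
  rw [← Fin.succ_zero_eq_one, Fin.succ_inj] at h
  exact Fin.succ_ne_zero i h

variable {m : ℕ}

lemma pi_one (π : Equiv.Perm (Fin (m+2))) (hπ : π * π = 1) (h0 : π 0 = 1) : π 1 = 0 := by
  have := (mul_self_iff π).1 hπ 0
  rwa [h0] at this

lemma rho_sq (π : Equiv.Perm (Fin (m+2))) (hπ : π * π = 1) (h0 : π 0 = 1) : (π * Equiv.swap 0 1) * (π * Equiv.swap 0 1) = 1 := by
  refine mul_swap_invol π hπ 0 1 ?_
  rw [h0, pi_one π hπ h0]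
  exact Equiv.swap_comm 1 0

lemma rho_zero (π : Equiv.Perm (Fin (m+2))) (hπ : π * π = 1) (h0 : π 0 = 1) : (π * Equiv.swap 0 1 : Equiv.Perm (Fin (m+2))) 0 = 0 := by
  rw [Equiv.Perm.mul_apply, Equiv.swap_apply_left]
  exact pi_one π hπ h0

lemma rho_one (π : Equiv.Perm (Fin (m+2))) (hπ : π * π = 1) (h0 : π 0 = 1) : (π * Equiv.swap 0 1 : Equiv.Perm (Fin (m+2))) 1 = 1 := by
  rw [Equiv.Perm.mul_apply, Equiv.swap_apply_right]
  exact h0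

lemma rho_ss (π : Equiv.Perm (Fin (m+2))) (i : Fin m) : (π * Equiv.swap 0 1 : Equiv.Perm (Fin (m+2))) i.succ.succ = π i.succ.succ := by
  rw [Equiv.Perm.mul_apply,
    Equiv.swap_apply_of_ne_of_ne (Fin.succ_ne_zero _) (ss_ne_one i)]

lemma sigma1_zero (π : Equiv.Perm (Fin (m+2))) (hπ : π * π = 1) (h0 : π 0 = 1) :
    resPerm (π * Equiv.swap 0 1) (rho_sq π hπ h0) (rho_zero π hπ h0) 0 = 0 := by
  refine Fin.succ_inj.mp ?_
  rw [resPerm_succ, Fin.succ_zero_eq_one, rho_one π hπ h0]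

/-- Double restriction of an involution with `π 0 = 1` (hence `π 1 = 0`). -/
def dres (π : Equiv.Perm (Fin (m+2))) (hπ : π * π = 1) (h0 : π 0 = 1) : Equiv.Perm (Fin m) :=
  resPerm (resPerm (π * Equiv.swap 0 1) (rho_sq π hπ h0) (rho_zero π hπ h0))
    (resPerm_mul_self _ _ _) (sigma1_zero π hπ h0)

lemma dres_mul_self (π : Equiv.Perm (Fin (m+2))) (hπ : π * π = 1) (h0 : π 0 = 1) : dres π hπ h0 * dres π hπ h0 = 1 := resPerm_mul_self _ _ _

lemma dres_ss (π : Equiv.Perm (Fin (m+2))) (hπ : π * π = 1) (h0 : π 0 = 1) (i : Fin m) : ((dres π hπ h0) i).succ.succ = π i.succ.succ := by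
  rw [dres, resPerm_succ, resPerm_succ, rho_ss π i]

lemma dres_fixed_iff (π : Equiv.Perm (Fin (m+2))) (hπ : π * π = 1) (h0 : π 0 = 1) (i : Fin m) : dres π hπ h0 i = i ↔ π i.succ.succ = i.succ.succ := by
  rw [← dres_ss π hπ h0 i, Fin.succ_inj, Fin.succ_inj]

/-- Double extension: extend an involution of `Fin m` to `Fin (m+2)` swapping `0` and `1`. -/
def dext {m : ℕ} (σ : Equiv.Perm (Fin m)) (hσ : σ * σ = 1) : Equiv.Perm (Fin (m+2)) :=
  extPerm (extPerm σ hσ) (extPerm_mul_self σ hσ) * Equiv.swap 0 1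

variable {σ : Equiv.Perm (Fin m)}

lemma dext_zero (hσ : σ * σ = 1) : dext σ hσ 0 = 1 := by
  rw [dext, Equiv.Perm.mul_apply, Equiv.swap_apply_left, ← Fin.succ_zero_eq_one,
    extPerm_succ, extPerm_zero]

lemma dext_one (hσ : σ * σ = 1) : dext σ hσ 1 = 0 := by
  rw [dext, Equiv.Perm.mul_apply, Equiv.swap_apply_right, extPerm_zero]

lemma dext_ss (hσ : σ * σ = 1) (i : Fin m) : dext σ hσ i.succ.succ = (σ i).succ.succ := by
  rw [dext, Equiv.Perm.mul_apply,
    Equiv.swap_apply_of_ne_of_ne (Fin.succ_ne_zero _) (ss_ne_one i),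
    extPerm_succ, extPerm_succ]

lemma dext_mul_self (hσ : σ * σ = 1) : dext σ hσ * dext σ hσ = 1 := by
  rw [dext]
  refine mul_swap_invol _ (extPerm_mul_self _ _) 0 1 ?_
  rw [show extPerm (extPerm σ hσ) (extPerm_mul_self σ hσ) 0 = 0 from extPerm_zero _ _,
    show extPerm (extPerm σ hσ) (extPerm_mul_self σ hσ) 1 = 1 from ?_]
  rw [← Fin.succ_zero_eq_one, extPerm_succ, extPerm_zero]

lemma dres_dext (hσ : σ * σ = 1) (h0' : dext σ hσ 0 = 1) :
    dres (dext σ hσ) (dext_mul_self hσ) h0' = σ := by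
  refine Equiv.ext fun i => ?_
  refine Fin.succ_inj.mp (Fin.succ_inj.mp ?_)
  rw [dres_ss, dext_ss]

lemma dext_pi (π : Equiv.Perm (Fin (m+2))) (hπ : π * π = 1) (h0 : π 0 = 1) : dext (dres π hπ h0) (dres_mul_self π hπ h0) = π := by
  refine Equiv.ext fun a => ?_
  induction a using Fin.cases with
  | zero => rw [dext_zero, h0]
  | succ j =>
    induction j using Fin.cases with
    | zero =>
      rw [Fin.succ_zero_eq_one, dext_one, pi_one π hπ h0]
    | succ i =>
      rw [dext_ss, dres_ss]

end SignedInvAux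

namespace SignedInvAux

lemma filter_card_succ2 {m : ℕ} (Q : Fin (m+2) → Prop) [DecidablePred Q] :
    (Finset.univ.filter Q).card =
      ((if Q 0 then 1 else 0) + (if Q 1 then 1 else 0)) +
        (Finset.univ.filter fun i : Fin m => Q i.succ.succ).card := by
  rw [filter_card_succ Q, filter_card_succ (fun i : Fin (m+1) => Q i.succ),
    Fin.succ_zero_eq_one]
  exact (add_assoc _ _ _).symm

lemma card_fix_dres {m : ℕ} (π : Equiv.Perm (Fin (m+2))) (hπ : π * π = 1) (h0 : π 0 = 1)
    (ε : Fin (m+2) → Bool) (c : Bool) :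
    (Finset.univ.filter fun i : Fin (m+2) => π i = i ∧ ε i = c).card
      = (Finset.univ.filter fun i : Fin m =>
          (dres π hπ h0) i = i ∧ ε i.succ.succ = c).card := by
  rw [filter_card_succ2]
  have hz : ¬ (π 0 = 0) := by rw [h0]; exact Ne.symm Fin.zero_ne_one
  have ho : ¬ (π 1 = 1) := by rw [pi_one π hπ h0]; exact Fin.zero_ne_one
  rw [if_neg (fun h => hz h.1), if_neg (fun h => ho h.1)]
  have he : (Finset.univ.filter fun i : Fin m =>
      π i.succ.succ = i.succ.succ ∧ ε i.succ.succ = c) =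
      (Finset.univ.filter fun i : Fin m => (dres π hπ h0) i = i ∧ ε i.succ.succ = c) := by
    apply Finset.filter_congr
    intro i _
    rw [dres_fixed_iff π hπ h0 i]
  rw [he]
  omega

lemma card_mov_dres {m : ℕ} (π : Equiv.Perm (Fin (m+2))) (hπ : π * π = 1) (h0 : π 0 = 1) :
    (Finset.univ.filter fun i : Fin (m+2) => π i ≠ i).card
      = 2 + (Finset.univ.filter fun i : Fin m => (dres π hπ h0) i ≠ i).card := by
  rw [filter_card_succ2]
  have hz : π 0 ≠ 0 := by rw [h0]; exact Ne.symm Fin.zero_ne_one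
  have ho : π 1 ≠ 1 := by rw [pi_one π hπ h0]; exact Fin.zero_ne_one
  rw [if_pos hz, if_pos ho]
  have he : (Finset.univ.filter fun i : Fin m => π i.succ.succ ≠ i.succ.succ) =
      (Finset.univ.filter fun i : Fin m => (dres π hπ h0) i ≠ i) := by
    apply Finset.filter_congr
    intro i _
    rw [not_iff_not]
    exact (dres_fixed_iff π hπ h0 i).symm
  rw [he]

def dresEquiv (m k : ℕ) (t : ℤ) :
    {x : Equiv.Perm (Fin (m+2)) × (Fin (m+2) → Bool) //
        Cond (k+1) t (m+2) x ∧ x.1 0 = 1} ≃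
    {y : Equiv.Perm (Fin m) × (Fin m → Bool) // Cond k t m y} where
  toFun x := ⟨(dres x.1.1 x.2.1.1 x.2.2, fun i => x.1.2 i.succ.succ), by
    obtain ⟨⟨π, ε⟩, ⟨h1, h2, h3, h4⟩, h0⟩ := x
    dsimp only at h1 h2 h3 h4 h0 ⊢
    refine ⟨dres_mul_self π h1 h0, ?_, ?_, ?_⟩
    · intro i hi
      exact h2 i.succ.succ fun hq => hi ((dres_fixed_iff π h1 h0 i).mpr hq)
    · rw [card_fix_dres π h1 h0 ε true, card_fix_dres π h1 h0 ε false] at h3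
      exact h3
    · dsimp only
      rw [card_mov_dres π h1 h0] at h4
      omega⟩
  invFun y := ⟨(dext y.1.1 y.2.1, Fin.cases true (Fin.cases true y.1.2)), by
    obtain ⟨⟨σ, δ⟩, g1, g2, g3, g4⟩ := y
    dsimp only at g1 g2 g3 g4 ⊢
    have hz : dext σ g1 0 = 1 := dext_zero g1
    refine ⟨⟨dext_mul_self g1, ?_, ?_, ?_⟩, hz⟩
    · intro i hi
      dsimp only at hi ⊢
      induction i using Fin.cases with
      | zero => simp
      | succ j =>
        induction j using Fin.cases with
        | zero => simp only [Fin.cases_succ, Fin.cases_zero]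
        | succ i =>
          rw [dext_ss g1] at hi
          have hd : σ i ≠ i := fun hq => hi (by rw [hq])
          simpa using g2 i hd
    · dsimp only
      rw [card_fix_dres (dext σ g1) (dext_mul_self g1) hz _ true,
        card_fix_dres (dext σ g1) (dext_mul_self g1) hz _ false, dres_dext g1 hz]
      simp only [Fin.cases_succ]
      exact g3
    · dsimp only
      rw [card_mov_dres (dext σ g1) (dext_mul_self g1) hz, dres_dext g1 hz, g4]
      omega⟩
  left_inv x := by
    obtain ⟨⟨π, ε⟩, ⟨h1, h2, h3, h4⟩, h0⟩ := x
    refine Subtype.ext (Prod.ext ?_ ?_)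
    · exact dext_pi π h1 h0
    · funext a
      dsimp only
      induction a using Fin.cases with
      | zero =>
        rw [Fin.cases_zero]
        exact (h2 0 (by rw [h0]; exact Ne.symm Fin.zero_ne_one)).symm
      | succ j =>
        induction j using Fin.cases with
        | zero =>
          rw [Fin.cases_succ, Fin.cases_zero, Fin.succ_zero_eq_one]
          exact (h2 1 (by rw [pi_one π h1 h0]; exact Fin.zero_ne_one)).symm
        | succ i =>
          rw [Fin.cases_succ, Fin.cases_succ]
  right_inv y := by
    obtain ⟨⟨σ, δ⟩, hy⟩ := y
    refine Subtype.ext (Prod.ext ?_ ?_)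
    · exact dres_dext hy.1 (dext_zero hy.1)
    · funext i
      simp

end SignedInvAux

namespace SignedInvAux

lemma L3 (m k : ℕ) (t : ℤ) :
    Nat.card {x : Equiv.Perm (Fin (m+2)) × (Fin (m+2) → Bool) //
      Cond (k+1) t (m+2) x ∧ ¬ (x.1 0 = 0)} = (m+1) * G k t m := by
  have e : {x : Equiv.Perm (Fin (m+2)) × (Fin (m+2) → Bool) //
        Cond (k+1) t (m+2) x ∧ ¬ (x.1 0 = 0)} ≃
      Fin (m+1) × {y : Equiv.Perm (Fin m) × (Fin m → Bool) // Cond k t m y} :=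
    (conjEquiv m (k+1) t).trans (Equiv.prodCongr (Equiv.refl _) (dresEquiv m k t))
  rw [Nat.card_congr e, Nat.card_prod,
    Nat.card_eq_of_equiv_fin (Equiv.refl (Fin (m+1)))]
  rfl

lemma key (m k : ℕ) (t : ℤ) :
    G (k+1) t (m+2) = G (k+1) (t-1) (m+1) + G (k+1) (t+1) (m+1) + (m+1) * G k t m := by
  have hs1 := card_split (Cond (k+1) t (m+2)) (fun x => x.1 0 = 0)
  have hs2 := card_split (fun x : Equiv.Perm (Fin (m+2)) × (Fin (m+2) → Bool) =>
    Cond (k+1) t (m+2) x ∧ x.1 0 = 0) (fun x => x.2 0 = true)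
  have h1 : Nat.card {x : Equiv.Perm (Fin (m+2)) × (Fin (m+2) → Bool) //
      (Cond (k+1) t (m+2) x ∧ x.1 0 = 0) ∧ x.2 0 = true} = G (k+1) (t-1) (m+1) := by
    rw [Nat.card_congr (resEquiv (m+1) (k+1) t true)]
    rfl
  have h2 : Nat.card {x : Equiv.Perm (Fin (m+2)) × (Fin (m+2) → Bool) //
      (Cond (k+1) t (m+2) x ∧ x.1 0 = 0) ∧ ¬ (x.2 0 = true)} = G (k+1) (t+1) (m+1) := by
    have e : {x : Equiv.Perm (Fin (m+2)) × (Fin (m+2) → Bool) //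
        (Cond (k+1) t (m+2) x ∧ x.1 0 = 0) ∧ ¬ (x.2 0 = true)} ≃
        {x : Equiv.Perm (Fin (m+2)) × (Fin (m+2) → Bool) //
        (Cond (k+1) t (m+2) x ∧ x.1 0 = 0) ∧ x.2 0 = false} :=
      Equiv.subtypeEquivRight fun x => by rw [Bool.not_eq_true]
    rw [Nat.card_congr (e.trans (resEquiv (m+1) (k+1) t false))]
    rfl
  have h3 := L3 m k t
  show Nat.card _ = _
  omega

end SignedInvAux


theorem stmt1 (p q k : ℕ) (hp : 1 ≤ p) (hq : 1 ≤ q) (hk : 1 ≤ k) :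
    gammaCount k p q =
      gammaCount k (p - 1) q + gammaCount k p (q - 1) +
        (p + q - 1) * gammaCount (k - 1) (p - 1) (q - 1) := by
  obtain ⟨p', rfl⟩ : ∃ p', p = p' + 1 := ⟨p - 1, by omega⟩
  obtain ⟨q', rfl⟩ : ∃ q', q = q' + 1 := ⟨q - 1, by omega⟩
  obtain ⟨k', rfl⟩ : ∃ k', k = k' + 1 := ⟨k - 1, by omega⟩
  simp only [Nat.add_sub_cancel]
  rw [SignedInvAux.gamma_eq, SignedInvAux.gamma_eq, SignedInvAux.gamma_eq,
    SignedInvAux.gamma_eq]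
  rw [show ((p'+1)+(q'+1)) = (p'+q')+2 from by omega,
    show (p'+(q'+1)) = (p'+q')+1 from by omega,
    show ((p'+1)+q') = (p'+q')+1 from by omega,
    show ((p'+q')+2-1) = (p'+q')+1 from by omega,
    show ((p'+1 : ℕ) : ℤ) - ((q'+1 : ℕ) : ℤ) = (p' : ℤ) - q' from by push_cast; ring,
    show ((p' : ℕ) : ℤ) - ((q'+1 : ℕ) : ℤ) = ((p' : ℤ) - q') - 1 from by push_cast; ring,
    show ((p'+1 : ℕ) : ℤ) - ((q' : ℕ) : ℤ) = ((p' : ℤ) - q') + 1 from by push_cast; ring]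
  exact SignedInvAux.key (p'+q') k' ((p' : ℤ) - q')
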